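/- Consider Moser's Hamiltonian H : ℂ² → ℝ, H(z₁, z₂) = ½(|z₁|² − |z₂|²) + (|z₁|² + |z₂|²)·Re(z₁z₂), with Hamiltonian system ż₁ = −i z₁ − 2i z₁ Re(z₁z₂) − i(|z₁|² + |z₂|²) z̄₂ and ż₂ = i z₂ − 2i z₂ Re(z₁z₂) − i(|z₁|² + |z₂|²) z̄₁. Along any solution (z₁(t), z₂(t)) of this system, the function G(z₁, z₂) = Im(z₁z₂) satisfies the identity d/dt [Im(z₁(t)z₂(t))] = −4(Re(z₁(t)z₂(t)))² − (|z₁(t)|² + |z₂(t)|²)², which is strictly negative whenever (z₁(t), z₂(t)) ≠ (0,0). -/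

import Mathlib

/-- **Moser's monotone quantity.**  Along any solution of the Hamiltonian system of
Moser's Hamiltonian `H(z₁,z₂) = ½(|z₁|² - |z₂|²) + (|z₁|² + |z₂|²)·Re(z₁z₂)`, namely
`ż₁ = -i z₁ - 2i z₁ Re(z₁z₂) - i(|z₁|² + |z₂|²) z̄₂` and
`ż₂ =  i z₂ - 2i z₂ Re(z₁z₂) - i(|z₁|² + |z₂|²) z̄₁`,
the function `G = Im(z₁z₂)` satisfies
`d/dt Im(z₁z₂) = -4 (Re(z₁z₂))² - (|z₁|² + |z₂|²)²`, which is strictly negative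
whenever `(z₁, z₂) ≠ (0, 0)`. -/
theorem moser_derivative_of_im
    (z₁ z₂ : ℝ → ℂ)
    (h₁ : ∀ t : ℝ, HasDerivAt z₁
      (-Complex.I * z₁ t - 2 * Complex.I * z₁ t * (((z₁ t * z₂ t).re : ℝ) : ℂ)
        - Complex.I * (((‖z₁ t‖ ^ 2 + ‖z₂ t‖ ^ 2 : ℝ)) : ℂ) * (starRingEnd ℂ) (z₂ t)) t)
    (h₂ : ∀ t : ℝ, HasDerivAt z₂
      (Complex.I * z₂ t - 2 * Complex.I * z₂ t * (((z₁ t * z₂ t).re : ℝ) : ℂ)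
        - Complex.I * (((‖z₁ t‖ ^ 2 + ‖z₂ t‖ ^ 2 : ℝ)) : ℂ) * (starRingEnd ℂ) (z₁ t)) t) :
    ∀ t : ℝ,
      HasDerivAt (fun s : ℝ => (z₁ s * z₂ s).im)
        (-4 * ((z₁ t * z₂ t).re) ^ 2 - (‖z₁ t‖ ^ 2 + ‖z₂ t‖ ^ 2) ^ 2) t ∧
      ((z₁ t, z₂ t) ≠ ((0 : ℂ), (0 : ℂ)) →
        -4 * ((z₁ t * z₂ t).re) ^ 2 - (‖z₁ t‖ ^ 2 + ‖z₂ t‖ ^ 2) ^ 2 < 0) := by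
  intro t
  constructor
  · have hp := (h₁ t).mul (h₂ t)
    have him := Complex.imCLM.hasFDerivAt.comp_hasDerivAt t hp
    convert him using 1
    · rfl
    · rfl
    · rfl
    simp only [Complex.imCLM_apply]
    have e1 : ‖z₁ t‖ ^ 2 = (z₁ t).re ^ 2 + (z₁ t).im ^ 2 := by
      rw [Complex.sq_norm, Complex.normSq_apply]; ring
    have e2 : ‖z₂ t‖ ^ 2 = (z₂ t).re ^ 2 + (z₂ t).im ^ 2 := by
      rw [Complex.sq_norm, Complex.normSq_apply]; ring
    rw [e1, e2]
    simp [Complex.add_im, Complex.mul_im, Complex.mul_re, Complex.sub_re, Complex.sub_im]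
    simp only [← Complex.ofReal_pow, Complex.ofReal_re]
    ring
  · intro hne
    have h : 0 < ‖z₁ t‖ ^ 2 + ‖z₂ t‖ ^ 2 := by
      rcases (by simpa [Prod.ext_iff] using hne : ¬(z₁ t = 0 ∧ z₂ t = 0)) with h
      by_contra hc
      push_neg at hc
      have h1 : ‖z₁ t‖ = 0 := by nlinarith [norm_nonneg (z₁ t), norm_nonneg (z₂ t), sq_nonneg ‖z₁ t‖, sq_nonneg ‖z₂ t‖]
      have h2 : ‖z₂ t‖ = 0 := by nlinarith [norm_nonneg (z₁ t), norm_nonneg (z₂ t), sq_nonneg ‖z₁ t‖, sq_nonneg ‖z₂ t‖]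
      exact h ⟨norm_eq_zero.mp h1, norm_eq_zero.mp h2⟩
    nlinarith [sq_nonneg ((z₁ t * z₂ t).re)]
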